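/- Let f, g and h be entire functions given by everywhere absolutely convergent vector valued Dirichlet series, and let p ≥ 0, q ≥ 0, m ≥ 0 be integers. Assume 0 < λ_h^{(m,q)}(f) ≤ ρ_h^{(m,q)}(f) < +∞ and 0 < λ_h^{(m,p)}(g) ≤ ρ_h^{(m,p)}(g) < +∞. Then λ_h^{(m,q)}(f)/ρ_h^{(m,p)}(g) ≤ λ_g^{(p,q)}(f) ≤ min{ λ_h^{(m,q)}(f)/λ_h^{(m,p)}(g), ρ_h^{(m,q)}(f)/ρ_h^{(m,p)}(g) } ≤ max{ λ_h^{(m,q)}(f)/λ_h^{(m,p)}(g), ρ_h^{(m,q)}(f)/ρ_h^{(m,p)}(g) } ≤ ρ_g^{(p,q)}(f) ≤ ρ_h^{(m,q)}(f)/λ_h^{(m,p)}(g). -/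

import Mathlib

open Filter Topology Complex MeasureTheory

set_option linter.unusedSectionVars false
set_option linter.unnecessarySimpa false
set_option maxHeartbeats 1000000

noncomputable section

section DTestSection
variable {E : Type*} [NormedAddCommGroup E] [NormedSpace ℂ E] [CompleteSpace E]

namespace DTest

def DSer (a : ℕ → E) (μ : ℕ → ℝ) (s : ℂ) : E := ∑' n, Complex.exp (s * (μ n : ℂ)) • a n
def DSup (a : ℕ → E) (μ : ℕ → ℝ) (σ : ℝ) : ℝ :=
  ⨆ t : ℝ, ‖DSer a μ ((σ : ℂ) + (t : ℂ) * Complex.I)‖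
def DAbs (a : ℕ → E) (μ : ℕ → ℝ) (σ : ℝ) : ℝ := ∑' n, Real.exp (σ * μ n) * ‖a n‖

variable {a : ℕ → E} {μ : ℕ → ℝ}

lemma norm_term (s : ℂ) (n : ℕ) :
    ‖Complex.exp (s * (μ n : ℂ)) • a n‖ = Real.exp (s.re * μ n) * ‖a n‖ := by
  rw [norm_smul, Complex.norm_exp]
  congr 2
  simp [Complex.mul_re]

variable (hsum : ∀ σ : ℝ, Summable fun n => Real.exp (σ * μ n) * ‖a n‖)
include hsum

lemma summable_term (s : ℂ) :
    Summable fun n => Complex.exp (s * (μ n : ℂ)) • a n := by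
  apply Summable.of_norm
  simpa only [norm_term] using hsum s.re

lemma bddAbove_range (σ : ℝ) :
    BddAbove (Set.range fun t : ℝ => ‖DSer a μ ((σ : ℂ) + (t : ℂ) * Complex.I)‖) := by
  refine ⟨DAbs a μ σ, ?_⟩
  rintro y ⟨t, rfl⟩
  have h1 : Summable fun n => ‖Complex.exp ((((σ:ℂ) + (t:ℂ)*Complex.I)) * (μ n : ℂ)) • a n‖ := by
    simpa only [norm_term] using hsum ((σ:ℂ) + (t:ℂ)*Complex.I).re
  refine (norm_tsum_le_tsum_norm h1).trans ?_
  simp only [norm_term, DAbs]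
  simp

lemma norm_le_DSup (σ t : ℝ) : ‖DSer a μ ((σ : ℂ) + (t : ℂ) * Complex.I)‖ ≤ DSup a μ σ :=
  le_ciSup (bddAbove_range hsum σ) t

lemma bohr (hμ : Function.Injective μ) (k : ℕ) (σ : ℝ) :
    Real.exp (σ * μ k) * ‖a k‖ ≤ DSup a μ σ := by
  classical
  set g : ℕ → ℝ → E := fun n t =>
    (Complex.exp ((σ : ℂ) * (μ n : ℂ)) *
      Complex.exp ((Complex.I * ((μ n - μ k : ℝ) : ℂ)) * (t : ℂ))) • a n with hg
  have hgnorm : ∀ n t, ‖g n t‖ = Real.exp (σ * μ n) * ‖a n‖ := by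
    intro n t
    rw [hg]
    simp only [norm_smul, norm_mul, Complex.norm_exp]
    have h1 : ((σ : ℂ) * (μ n : ℂ)).re = σ * μ n := by
      simp [Complex.mul_re]
    have h2 : ((Complex.I * ((μ n - μ k : ℝ) : ℂ)) * (t : ℂ)).re = 0 := by
      simp [Complex.mul_re]
    rw [h1, h2, Real.exp_zero, mul_one]
  have hgcont : ∀ n, Continuous fun t : ℝ => g n t := by
    intro n
    exact ((continuous_const.mul
      ((continuous_const.mul Complex.continuous_ofReal).cexp))).smul continuous_const
  have hptwise : ∀ t : ℝ,
      Complex.exp (-(Complex.I * (μ k : ℂ) * (t : ℂ))) •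
        DSer a μ ((σ:ℂ) + (t:ℂ)*Complex.I) = ∑' n, g n t := by
    intro t
    rw [DSer, ← Summable.tsum_const_smul _ (summable_term hsum _)]
    congr 1
    funext n
    rw [smul_smul, hg]
    simp only
    rw [← Complex.exp_add, ← Complex.exp_add]
    congr 2
    push_cast
    ring
  -- the averaged integral
  set IT : ℝ → E := fun T => ∫ t in Set.Ioc (-T) T,
    Complex.exp (-(Complex.I * (μ k : ℂ) * (t : ℂ))) •
      DSer a μ ((σ:ℂ) + (t:ℂ)*Complex.I) with hIT
  set JT : ℝ → ℕ → E := fun T n => ∫ t in Set.Ioc (-T) T, g n t with hJT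
  have hswap : ∀ T : ℝ, IT T = ∑' n, JT T n := by
    intro T
    rw [hIT]
    simp only
    rw [show (fun t : ℝ => Complex.exp (-(Complex.I * (μ k : ℂ) * (t : ℂ))) •
        DSer a μ ((σ:ℂ) + (t:ℂ)*Complex.I)) = fun t => ∑' n, g n t from funext hptwise]
    refine integral_tsum (fun n => (hgcont n).aestronglyMeasurable) ?_
    have hval : ∀ n, (∫⁻ t in Set.Ioc (-T) T, ‖g n t‖₊) =
        ((Real.exp (σ * μ n) * ‖a n‖).toNNReal : ENNReal) * ENNReal.ofReal (T - (-T)) := by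
      intro n
      have : (fun t => (‖g n t‖₊ : ENNReal)) =
          fun _ => ((Real.exp (σ * μ n) * ‖a n‖).toNNReal : ENNReal) := by
        funext t
        congr 1
        ext
        rw [coe_nnnorm, hgnorm n t, Real.coe_toNNReal]
        positivity
      rw [this, MeasureTheory.lintegral_const]
      simp [Real.volume_Ioc]
    simp only [enorm_eq_nnnorm]
    rw [tsum_congr hval, ENNReal.tsum_mul_right]
    refine ENNReal.mul_ne_top ?_ ENNReal.ofReal_ne_top
    rw [ENNReal.tsum_coe_ne_top_iff_summable]
    exact (hsum σ).toNNReal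
  have hJbound : ∀ T : ℝ, 0 < T → ∀ n, ‖JT T n‖ ≤ (Real.exp (σ * μ n) * ‖a n‖) * (2 * T) := by
    intro T hT n
    rw [hJT]
    refine (norm_setIntegral_le_of_norm_le_const (C := Real.exp (σ * μ n) * ‖a n‖) ?_ ?_).trans ?_
    · rw [Real.volume_Ioc]; exact ENNReal.ofReal_lt_top
    · intro t _
      exact (hgnorm n t).le
    · rw [Real.volume_real_Ioc_of_le (by linarith)]
      apply le_of_eq
      ring_nf
  have hJsummable : ∀ T : ℝ, 0 < T → Summable (JT T) := by
    intro T hT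
    apply Summable.of_norm
    apply Summable.of_nonneg_of_le (fun n => norm_nonneg _) (hJbound T hT)
    exact (hsum σ).mul_right _
  -- the limit of each averaged term
  set L : ℕ → E := fun n => if n = k then Complex.exp ((σ : ℂ) * (μ k : ℂ)) • a k else 0 with hL
  have hlim : ∀ n, Tendsto (fun T : ℝ => (2 * T)⁻¹ • JT T n) atTop (𝓝 (L n)) := by
    intro n
    by_cases hn : n = k
    · subst hn
      have hev : (fun T : ℝ => (2 * T)⁻¹ • JT T n) =ᶠ[atTop] (fun _ => L n) := by
        filter_upwards [eventually_gt_atTop (0:ℝ)] with T hT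
        have hck : (μ n - μ n : ℝ) = 0 := by ring
        have : (fun t : ℝ => g n t) = fun _ => Complex.exp ((σ : ℂ) * (μ n : ℂ)) • a n := by
          funext t
          rw [hg]
          simp
        rw [hJT]
        simp only
        rw [this, MeasureTheory.setIntegral_const,
          Real.volume_real_Ioc_of_le (by linarith), hL]
        rw [smul_smul, show T - (-T) = 2 * T by ring, inv_mul_cancel₀ (by linarith), one_smul]
        simp
      exact Tendsto.congr' hev.symm tendsto_const_nhds
    · have hcn : (((μ n - μ k : ℝ)) : ℂ) ≠ 0 := by
        simp only [ne_eq, Complex.ofReal_eq_zero, sub_eq_zero]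
        exact fun hh => hn (hμ hh)
      have hIcn : Complex.I * ((μ n - μ k : ℝ) : ℂ) ≠ 0 := mul_ne_zero Complex.I_ne_zero hcn
      have hJval : ∀ T : ℝ, 0 < T → ‖JT T n‖ ≤
          Real.exp (σ * μ n) * ‖a n‖ * (2 / |μ n - μ k|) := by
        intro T hT
        have h1 : JT T n = ((Complex.exp ((σ : ℂ) * (μ n : ℂ))) *
            ∫ t in Set.Ioc (-T) T, Complex.exp ((Complex.I * ((μ n - μ k : ℝ) : ℂ)) * (t : ℂ))) •
            a n := by
          rw [hJT]
          simp only
          rw [hg]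
          simp only
          rw [integral_smul_const, MeasureTheory.integral_const_mul]
        have h2 : (∫ t in Set.Ioc (-T) T,
            Complex.exp ((Complex.I * ((μ n - μ k : ℝ) : ℂ)) * (t : ℂ))) =
            (Complex.exp ((Complex.I * ((μ n - μ k : ℝ) : ℂ)) * (T:ℂ)) -
             Complex.exp ((Complex.I * ((μ n - μ k : ℝ) : ℂ)) * ((-T:ℝ):ℂ))) /
            (Complex.I * ((μ n - μ k : ℝ) : ℂ)) := by
          rw [← intervalIntegral.integral_of_le (by linarith : -T ≤ T)]
          exact integral_exp_mul_complex hIcn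
        rw [h1, norm_smul, norm_mul, h2]
        have habs : ∀ u : ℝ, ‖(Complex.exp
            ((Complex.I * ((μ n - μ k : ℝ) : ℂ)) * (u:ℂ)))‖ = 1 := by
          intro u
          rw [Complex.norm_exp]
          have : ((Complex.I * ((μ n - μ k : ℝ) : ℂ)) * (u:ℂ)).re = 0 := by
            simp [Complex.mul_re]
          rw [this, Real.exp_zero]
        rw [Complex.norm_exp, norm_div]
        have h3 : ((σ : ℂ) * (μ n : ℂ)).re = σ * μ n := by simp [Complex.mul_re]
        rw [h3]
        have h4 : ‖(Complex.exp ((Complex.I * ((μ n - μ k : ℝ) : ℂ)) * (T:ℂ)) -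
            Complex.exp ((Complex.I * ((μ n - μ k : ℝ) : ℂ)) * ((-T:ℝ):ℂ)))‖ ≤ 2 := by
          refine (norm_sub_le _ _).trans ?_
          rw [habs T, habs (-T)]
          norm_num
        have h5 : ‖(Complex.I * ((μ n - μ k : ℝ) : ℂ))‖ = |μ n - μ k| := by
          rw [norm_mul, Complex.norm_I, one_mul, Complex.norm_real, Real.norm_eq_abs]
        rw [h5]
        have h6 : 0 < |μ n - μ k| := by
          rw [abs_pos, sub_ne_zero]
          exact fun hh => hn (hμ hh)
        calc Real.exp (σ * μ n) * (‖(_ : ℂ)‖ / |μ n - μ k|) * ‖a n‖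
            ≤ Real.exp (σ * μ n) * (2 / |μ n - μ k|) * ‖a n‖ := by
              gcongr
          _ = Real.exp (σ * μ n) * ‖a n‖ * (2 / |μ n - μ k|) := by ring
      have hzero : Tendsto (fun T : ℝ => (2 * T)⁻¹ •  JT T n) atTop (𝓝 0) := by
        apply squeeze_zero_norm'
          (a := fun T : ℝ => (2 * T)⁻¹ * (Real.exp (σ * μ n) * ‖a n‖ * (2 / |μ n - μ k|)))
        · filter_upwards [eventually_gt_atTop (0:ℝ)] with T hT
          rw [norm_smul, Real.norm_eq_abs, abs_of_pos (by positivity : (0:ℝ) < (2*T)⁻¹)]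
          gcongr
          exact hJval T hT
        · rw [show (0:ℝ) = 0 * (Real.exp (σ * μ n) * ‖a n‖ * (2 / |μ n - μ k|)) by ring]
          apply Tendsto.mul_const
          apply Tendsto.comp tendsto_inv_atTop_zero
          exact Tendsto.const_mul_atTop (by norm_num : (0:ℝ) < 2) tendsto_id
      rw [hL]
      simpa only [if_neg hn] using hzero
  have hVlim : Tendsto (fun T : ℝ => (2 * T)⁻¹ • IT T) atTop
      (𝓝 (Complex.exp ((σ : ℂ) * (μ k : ℂ)) • a k)) := by
    have h0 : (∑' n, L n) = Complex.exp ((σ : ℂ) * (μ k : ℂ)) • a k := by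
      rw [hL]
      exact tsum_ite_eq k _
    rw [← h0]
    have := tendsto_tsum_of_dominated_convergence (𝓕 := atTop (α := ℝ))
      (f := fun T n => (2 * T)⁻¹ • JT T n) (g := L)
      (bound := fun n => Real.exp (σ * μ n) * ‖a n‖) (hsum σ) hlim ?_
    · apply this.congr'
      filter_upwards [eventually_gt_atTop (0:ℝ)] with T hT
      rw [hswap T, ← Summable.tsum_const_smul _ (hJsummable T hT)]
    · filter_upwards [eventually_ge_atTop (1:ℝ)] with T hT n
      rw [norm_smul, Real.norm_eq_abs, abs_of_pos (by positivity : (0:ℝ) < (2*T)⁻¹)]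
      calc (2*T)⁻¹ * ‖JT T n‖ ≤ (2*T)⁻¹ * ((Real.exp (σ * μ n) * ‖a n‖) * (2*T)) := by
            gcongr
            exact hJbound T (by linarith) n
        _ = Real.exp (σ * μ n) * ‖a n‖ := by
            field_simp
  have hnormlim : Tendsto (fun T : ℝ => ‖(2 * T)⁻¹ • IT T‖) atTop
      (𝓝 (Real.exp (σ * μ k) * ‖a k‖)) := by
    have := hVlim.norm
    have h1 : ‖Complex.exp ((σ : ℂ) * (μ k : ℂ)) • a k‖ = Real.exp (σ * μ k) * ‖a k‖ := by
      rw [norm_smul, Complex.norm_exp]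
      congr 2
      simp [Complex.mul_re]
    rwa [h1] at this
  refine le_of_tendsto hnormlim ?_
  filter_upwards [eventually_gt_atTop (0:ℝ)] with T hT
  rw [norm_smul, Real.norm_eq_abs, abs_of_pos (by positivity : (0:ℝ) < (2*T)⁻¹)]
  have hITbound : ‖IT T‖ ≤ DSup a μ σ * (2 * T) := by
    rw [hIT]
    refine (norm_setIntegral_le_of_norm_le_const (C := DSup a μ σ) ?_ ?_).trans ?_
    · rw [Real.volume_Ioc]; exact ENNReal.ofReal_lt_top
    · intro t _
      rw [norm_smul, Complex.norm_exp]
      have : (-(Complex.I * (μ k : ℂ) * (t : ℂ))).re = 0 := by simp [Complex.mul_re]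
      rw [this, Real.exp_zero, one_mul]
      exact norm_le_DSup hsum σ t
    · rw [Real.volume_real_Ioc_of_le (by linarith)]
      apply le_of_eq
      ring_nf
  calc (2*T)⁻¹ * ‖IT T‖ ≤ (2*T)⁻¹ * (DSup a μ σ * (2*T)) := by
        gcongr
    _ = DSup a μ σ := by field_simp


lemma norm_DSer_le (s : ℂ) : ‖DSer a μ s‖ ≤ DAbs a μ s.re := by
  refine (norm_tsum_le_tsum_norm ?_).trans_eq ?_
  · simpa only [norm_term] using hsum s.re
  · simp only [norm_term, DAbs]

lemma DSup_nonneg (σ : ℝ) : 0 ≤ DSup a μ σ :=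
  Real.iSup_nonneg fun _ => norm_nonneg _

lemma DSup_le_DAbs (σ : ℝ) : DSup a μ σ ≤ DAbs a μ σ := by
  refine Real.iSup_le (fun t => ?_) ?_
  · simpa using norm_DSer_le hsum ((σ : ℂ) + (t : ℂ) * Complex.I)
  · exact tsum_nonneg fun n => mul_nonneg (Real.exp_pos _).le (norm_nonneg _)

section
variable (hμ0 : ∀ n, 0 ≤ μ n)
include hμ0

lemma DAbs_mono : Monotone (DAbs a μ) := by
  intro σ1 σ2 hle
  refine Summable.tsum_le_tsum (fun n => ?_) (hsum σ1) (hsum σ2)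
  have := hμ0 n
  have : σ1 * μ n ≤ σ2 * μ n := by nlinarith
  gcongr

lemma DAbs_continuous : Continuous (DAbs a μ) := by
  rw [continuous_iff_continuousAt]
  intro σ
  have h1 : ContinuousOn (DAbs a μ) (Set.Iic (σ + 1)) := by
    refine (tendstoUniformlyOn_tsum_nat (hsum (σ + 1)) fun n x hx => ?_).continuousOn
      (Eventually.of_forall fun N => ?_).frequently
    · rw [Real.norm_eq_abs, abs_mul, _root_.abs_of_nonneg (norm_nonneg _), Real.abs_exp]
      have h1 := hμ0 n
      have h2 : x * μ n ≤ (σ + 1) * μ n := by nlinarith [hx.out]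
      gcongr
    · exact Continuous.continuousOn (by continuity)
  exact h1.continuousAt (Iic_mem_nhds (by linarith))

lemma DSer_entire : Differentiable ℂ (DSer a μ) := by
  intro z
  have hR : z.re < z.re + 1 := by linarith
  have hopen : IsOpen {s : ℂ | s.re < z.re + 1} := isOpen_lt Complex.continuous_re continuous_const
  have : DifferentiableOn ℂ (DSer a μ) {s : ℂ | s.re < z.re + 1} := by
    have htu : TendstoUniformlyOn
        (fun (N : ℕ) (s : ℂ) => ∑ n ∈ Finset.range N, Complex.exp (s * (μ n : ℂ)) • a n)
        (DSer a μ) atTop {s : ℂ | s.re < z.re + 1} := by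
      refine tendstoUniformlyOn_tsum_nat (hsum (z.re + 1)) fun n s hs => ?_
      rw [norm_term]
      have h1 := hμ0 n
      have h2 : s.re * μ n ≤ (z.re + 1) * μ n := by nlinarith [hs.out]
      gcongr
    refine htu.tendstoLocallyUniformlyOn.differentiableOn (Eventually.of_forall ?_) hopen
    intro N
    apply DifferentiableOn.fun_sum
    intro n _
    apply Differentiable.differentiableOn
    exact ((differentiable_id.mul_const ((μ n : ℂ))).cexp).smul_const (a n)
  exact this.differentiableAt (hopen.mem_nhds hR)

lemma DAbs_tendsto_atBot (hμ : StrictMono μ) :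
    Tendsto (DAbs a μ) atBot (𝓝 (if μ 0 = 0 then ‖a 0‖ else 0)) := by
  have hlim := tendsto_tsum_of_dominated_convergence (𝓕 := atBot (α := ℝ))
    (f := fun σ n => Real.exp (σ * μ n) * ‖a n‖)
    (g := fun n => if μ n = 0 then ‖a n‖ else 0)
    (bound := fun n => ‖a n‖) ?_ ?_ ?_
  · have h0 : (∑' n, if μ n = 0 then ‖a n‖ else 0) = (if μ 0 = 0 then ‖a 0‖ else 0) := by
      refine tsum_eq_single 0 fun n hn => ?_
      have : 0 ≤ μ 0 := hμ0 0
      have : μ 0 < μ n := hμ (Nat.pos_of_ne_zero hn)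
      rw [if_neg (by linarith)]
    rw [← h0]
    exact hlim
  · simpa using hsum 0
  · intro n
    by_cases hn : μ n = 0
    · simp only [hn, mul_zero, Real.exp_zero, one_mul, if_pos rfl]
      exact tendsto_const_nhds
    · simp only [if_neg hn]
      rw [show (0:ℝ) = 0 * ‖a n‖ by ring]
      apply Tendsto.mul_const
      apply Real.tendsto_exp_atBot.comp
      have hpos : 0 < μ n := lt_of_le_of_ne (hμ0 n) (Ne.symm hn)
      exact Tendsto.atBot_mul_const hpos tendsto_id
  · filter_upwards [eventually_le_atBot (0:ℝ)] with σ hσ n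
    rw [Real.norm_eq_abs, abs_mul, _root_.abs_of_nonneg (norm_nonneg _), Real.abs_exp]
    have h1 := hμ0 n
    have h2 : σ * μ n ≤ 0 := mul_nonpos_of_nonpos_of_nonneg hσ h1
    calc Real.exp (σ * μ n) * ‖a n‖ ≤ Real.exp 0 * ‖a n‖ := by gcongr
      _ = ‖a n‖ := by rw [Real.exp_zero, one_mul]

lemma DSup_mono (hμ : StrictMono μ) : Monotone (DSup a μ) := by
  set L : ℝ := if μ 0 = 0 then ‖a 0‖ else 0 with hLdef
  have hLle : ∀ σ : ℝ, L ≤ DSup a μ σ := by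
    intro σ
    rw [hLdef]
    split_ifs with h0
    · have := bohr hsum hμ.injective 0 σ
      rwa [h0, mul_zero, Real.exp_zero, one_mul] at this
    · exact DSup_nonneg hsum σ
  intro σ1 σ2 h12
  rcases eq_or_lt_of_le h12 with rfl | hlt
  · exact le_refl _
  refine Real.iSup_le (fun t => ?_) (DSup_nonneg hsum σ2)
  refine le_of_forall_pos_le_add fun ε hε => ?_
  obtain ⟨σ0, hσ0, hDA⟩ : ∃ σ0 : ℝ, σ0 < σ1 ∧ DAbs a μ σ0 < L + ε := by
    have h1 : ∀ᶠ σ0 : ℝ in atBot, DAbs a μ σ0 < L + ε :=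
      (DAbs_tendsto_atBot hsum hμ0 hμ).eventually_lt_const (by linarith)
    obtain ⟨σ0, h2, h3⟩ := (h1.and (eventually_lt_atBot σ1)).exists
    exact ⟨σ0, h3, h2⟩
  have hkey : ‖DSer a μ ((σ1 : ℂ) + (t : ℂ) * Complex.I)‖ ≤
      max (DAbs a μ σ0) (DSup a μ σ2) := by
    refine PhragmenLindelof.vertical_strip (a := σ0) (b := σ2)
      ((DSer_entire hsum hμ0).diffContOnCl) ?_ (fun z hz => ?_) (fun z hz => ?_) ?_ ?_
    · refine ⟨0, by apply div_pos Real.pi_pos; linarith, 0, ?_⟩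
      refine Asymptotics.IsBigO.of_bound (DAbs a μ σ2) ?_
      rw [eventually_inf_principal]
      refine Eventually.of_forall fun z hz => ?_
      simp only [Set.mem_preimage, Set.mem_Ioo] at hz
      rw [zero_mul, Real.exp_zero, norm_one, mul_one]
      exact (norm_DSer_le hsum z).trans (DAbs_mono hsum hμ0 hz.2.le)
    · exact le_max_of_le_left ((norm_DSer_le hsum z).trans (le_of_eq (by rw [hz])))
    · refine le_max_of_le_right ?_
      have hzeq : z = (σ2 : ℂ) + (z.im : ℂ) * Complex.I := by
        apply Complex.ext <;> simp [hz]
      rw [hzeq]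
      exact norm_le_DSup hsum σ2 z.im
    · simp only [Complex.add_re, Complex.ofReal_re, Complex.mul_re, Complex.ofReal_im,
        Complex.I_re, Complex.I_im]
      nlinarith [hσ0]
    · simp only [Complex.add_re, Complex.ofReal_re, Complex.mul_re, Complex.ofReal_im,
        Complex.I_re, Complex.I_im]
      nlinarith [hlt]
  refine hkey.trans ?_
  have h4 : DAbs a μ σ0 ≤ DSup a μ σ2 + ε := by
    have := hLle σ2
    linarith
  have h5 : DSup a μ σ2 ≤ DSup a μ σ2 + ε := by linarith
  exact max_le h4 h5

lemma DSup_diff_le {σ1 σ2 : ℝ} (h12 : σ1 ≤ σ2) :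
    DSup a μ σ2 ≤ DSup a μ σ1 + (DAbs a μ σ2 - DAbs a μ σ1) := by
  have hd : 0 ≤ DAbs a μ σ2 - DAbs a μ σ1 := by
    have := DAbs_mono hsum hμ0 h12
    linarith
  refine Real.iSup_le (fun t => ?_) (by linarith [DSup_nonneg hsum σ1])
  set s1 : ℂ := (σ1 : ℂ) + (t : ℂ) * Complex.I with hs1
  set s2 : ℂ := (σ2 : ℂ) + (t : ℂ) * Complex.I with hs2
  have hdiff : ‖DSer a μ s2 - DSer a μ s1‖ ≤ DAbs a μ σ2 - DAbs a μ σ1 := by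
    have heq : DSer a μ s2 - DSer a μ s1 =
        ∑' n, (Complex.exp (s2 * (μ n : ℂ)) • a n - Complex.exp (s1 * (μ n : ℂ)) • a n) := by
      rw [DSer, DSer, Summable.tsum_sub (summable_term hsum s2) (summable_term hsum s1)]
    rw [heq]
    have hsummand : ∀ n, ‖Complex.exp (s2 * (μ n : ℂ)) • a n - Complex.exp (s1 * (μ n : ℂ)) • a n‖
        = (Real.exp (σ2 * μ n) - Real.exp (σ1 * μ n)) * ‖a n‖ := by
      intro n
      rw [← sub_smul, norm_smul]
      congr 1
      have hfact : Complex.exp (s2 * (μ n : ℂ)) - Complex.exp (s1 * (μ n : ℂ)) =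
          Complex.exp ((t : ℂ) * Complex.I * (μ n : ℂ)) *
            (((Real.exp (σ2 * μ n) - Real.exp (σ1 * μ n) : ℝ)) : ℂ) := by
        push_cast
        rw [hs2, hs1, add_mul, add_mul, Complex.exp_add, Complex.exp_add]
        ring
      rw [hfact, norm_mul, Complex.norm_exp]
      have hre : ((t : ℂ) * Complex.I * (μ n : ℂ)).re = 0 := by
        simp [Complex.mul_re, Complex.mul_im]
      rw [hre, Real.exp_zero, one_mul, Complex.norm_real, Real.norm_eq_abs]
      rw [_root_.abs_of_nonneg]
      have h1 := hμ0 n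
      have : σ1 * μ n ≤ σ2 * μ n := by nlinarith
      have := Real.exp_le_exp.2 this
      linarith
    have hsub : Summable fun n => (Real.exp (σ2 * μ n) - Real.exp (σ1 * μ n)) * ‖a n‖ := by
      have := (hsum σ2).sub (hsum σ1)
      simpa [sub_mul] using this
    refine (norm_tsum_le_tsum_norm (by simpa only [hsummand] using hsub)).trans ?_
    rw [tsum_congr hsummand]
    apply le_of_eq
    rw [DAbs, DAbs, ← Summable.tsum_sub (hsum σ2) (hsum σ1)]
    congr 1
    funext n
    ring
  have htri : ‖DSer a μ s2‖ ≤ ‖DSer a μ s1‖ + ‖DSer a μ s2 - DSer a μ s1‖ := by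
    calc ‖DSer a μ s2‖ = ‖DSer a μ s1 + (DSer a μ s2 - DSer a μ s1)‖ := by rw [add_sub_cancel]
      _ ≤ _ := norm_add_le _ _
  calc ‖DSer a μ s2‖ ≤ ‖DSer a μ s1‖ + ‖DSer a μ s2 - DSer a μ s1‖ := htri
    _ ≤ DSup a μ σ1 + (DAbs a μ σ2 - DAbs a μ σ1) :=
        add_le_add (norm_le_DSup hsum σ1 t) hdiff

lemma DSup_continuous (hμ : StrictMono μ) : Continuous (DSup a μ) := by
  have hkey : ∀ x y : ℝ, dist (DSup a μ x) (DSup a μ y) ≤ dist (DAbs a μ x) (DAbs a μ y) := by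
    have haux : ∀ x y : ℝ, x ≤ y →
        dist (DSup a μ x) (DSup a μ y) ≤ dist (DAbs a μ x) (DAbs a μ y) := by
      intro x y hxy
      rw [Real.dist_eq, Real.dist_eq]
      have h1 := DSup_mono hsum hμ0 hμ hxy
      have h2 := DSup_diff_le hsum hμ0 hxy
      have h3 := DAbs_mono hsum hμ0 hxy
      rw [abs_of_nonpos (by linarith), abs_of_nonpos (by linarith)]
      linarith
    intro x y
    rcases le_total x y with hxy | hxy
    · exact haux x y hxy
    · rw [dist_comm, dist_comm (DAbs a μ x)]
      exact haux y x hxy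
  rw [continuous_iff_continuousAt]
  intro σ
  rw [ContinuousAt, tendsto_iff_dist_tendsto_zero]
  apply squeeze_zero (fun x => dist_nonneg) (fun x => hkey x σ)
  have := ((DAbs_continuous hsum hμ0).continuousAt (x := σ)).tendsto
  rwa [tendsto_iff_dist_tendsto_zero] at this

end
end DTest
end DTestSection

/-- An entire function given by an everywhere absolutely convergent
vector valued Dirichlet series, with coefficients in a Banach space `E`. -/
structure VVDS (E : Type*) [NormedAddCommGroup E] [NormedSpace ℂ E] [CompleteSpace E] where
  a : ℕ → E
  lam : ℕ → ℝ
  lam_pos : ∀ n, 0 < lam n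
  lam_strictMono : StrictMono lam
  lam_tendsto : Tendsto lam atTop atTop
  log_index_bound : ∃ D : ℝ, ∀ᶠ n : ℕ in atTop, Real.log (n : ℝ) / lam n ≤ D
  coeff_decay : Tendsto (fun n => Real.log ‖a n‖ / lam n) atTop atBot
  abs_conv : ∀ s : ℂ, Summable (fun n => Real.exp (s.re * lam n) * ‖a n‖)

variable {E F G : Type*} [NormedAddCommGroup E] [NormedSpace ℂ E] [CompleteSpace E]
  [NormedAddCommGroup F] [NormedSpace ℂ F] [CompleteSpace F]
  [NormedAddCommGroup G] [NormedSpace ℂ G] [CompleteSpace G]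

/-- The entire function defined by the vector valued Dirichlet series. -/
def VVDS.toFun (f : VVDS E) (s : ℂ) : E := ∑' n, Complex.exp (s * (f.lam n : ℂ)) • f.a n

/-- The maximum modulus function `M_f(σ) = sup_t ‖f(σ+it)‖`. -/
def VVDS.M (f : VVDS E) (σ : ℝ) : ℝ := ⨆ t : ℝ, ‖f.toFun ((σ : ℂ) + (t : ℂ) * Complex.I)‖

/-- The inverse function of the maximum modulus function. -/
def VVDS.Minv (f : VVDS E) (y : ℝ) : ℝ := sInf {σ : ℝ | y ≤ f.M σ}

namespace VVDS

variable (f : VVDS E)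

lemma summable' (σ : ℝ) : Summable fun n => Real.exp (σ * f.lam n) * ‖f.a n‖ := by
  simpa using f.abs_conv (σ : ℂ)

lemma M_eq_DSup : f.M = DTest.DSup f.a f.lam := rfl

lemma lam_nonneg : ∀ n, 0 ≤ f.lam n := fun n => (f.lam_pos n).le

lemma M_nonneg (σ : ℝ) : 0 ≤ f.M σ := DTest.DSup_nonneg f.summable' σ

lemma M_continuous : Continuous f.M :=
  DTest.DSup_continuous f.summable' f.lam_nonneg f.lam_strictMono

lemma M_mono : Monotone f.M :=
  DTest.DSup_mono f.summable' f.lam_nonneg f.lam_strictMono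

lemma M_tendsto_atBot : Tendsto f.M atBot (𝓝 0) := by
  have h1 := DTest.DAbs_tendsto_atBot f.summable' f.lam_nonneg f.lam_strictMono
  rw [if_neg (f.lam_pos 0).ne'] at h1
  exact squeeze_zero' (Eventually.of_forall fun σ => f.M_nonneg σ)
    (Eventually.of_forall fun σ => DTest.DSup_le_DAbs f.summable' σ) h1

section NonTrivial
variable (hne : ∃ k, f.a k ≠ 0)
include hne

lemma M_pos (σ : ℝ) : 0 < f.M σ := by
  obtain ⟨k, hk⟩ := hne
  calc (0:ℝ) < Real.exp (σ * f.lam k) * ‖f.a k‖ := by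
        have := norm_pos_iff.2 hk
        positivity
    _ ≤ f.M σ := DTest.bohr f.summable' f.lam_strictMono.injective k σ

lemma M_tendsto_atTop : Tendsto f.M atTop atTop := by
  obtain ⟨k, hk⟩ := hne
  refine tendsto_atTop_mono
    (fun σ => DTest.bohr f.summable' f.lam_strictMono.injective k σ) ?_
  apply Tendsto.atTop_mul_const (norm_pos_iff.2 hk)
  exact Real.tendsto_exp_atTop.comp (Tendsto.atTop_mul_const (f.lam_pos k) tendsto_id)

lemma M_strictMono : StrictMono f.M := by
  obtain ⟨k, hk⟩ := hne
  set ν : ℕ → ℝ := fun n => f.lam n - f.lam 0 with hν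
  have hν0 : ∀ n, 0 ≤ ν n := fun n => by
    rw [hν]; simp only [sub_nonneg]; exact f.lam_strictMono.monotone (Nat.zero_le n)
  have hνsum : ∀ σ : ℝ, Summable fun n => Real.exp (σ * ν n) * ‖f.a n‖ := by
    intro σ
    have : (fun n => Real.exp (σ * ν n) * ‖f.a n‖)
        = fun n => Real.exp (-(σ * f.lam 0)) * (Real.exp (σ * f.lam n) * ‖f.a n‖) := by
      funext n
      rw [← mul_assoc, ← Real.exp_add, hν]
      ring_nf
    rw [this]
    exact (f.summable' σ).mul_left _
  have hrel : ∀ σ : ℝ, f.M σ = Real.exp (σ * f.lam 0) * DTest.DSup f.a ν σ := by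
    intro σ
    have hnorm : ∀ t : ℝ, ‖DTest.DSer f.a f.lam ((σ:ℂ) + (t:ℂ)*Complex.I)‖
        = Real.exp (σ * f.lam 0) * ‖DTest.DSer f.a ν ((σ:ℂ) + (t:ℂ)*Complex.I)‖ := by
      intro t
      set s : ℂ := (σ:ℂ) + (t:ℂ)*Complex.I with hs
      have hser : DTest.DSer f.a ν s = Complex.exp (-(s * (f.lam 0 : ℂ))) •
          DTest.DSer f.a f.lam s := by
        rw [DTest.DSer, DTest.DSer, ← Summable.tsum_const_smul _ (DTest.summable_term f.summable' s)]
        congr 1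
        funext n
        rw [smul_smul, ← Complex.exp_add, hν]
        congr 1
        push_cast
        ring
      rw [hser, norm_smul, Complex.norm_exp, ← mul_assoc, ← Real.exp_add]
      have hre : (-(s * (f.lam 0 : ℂ))).re = -(σ * f.lam 0) := by
        rw [hs]; simp [Complex.mul_re]
      rw [hre]
      simp
    rw [M_eq_DSup, DTest.DSup]
    apply le_antisymm
    · refine Real.iSup_le (fun t => ?_) ?_
      · rw [hnorm t]
        have hb := DTest.bddAbove_range (a := f.a) hνsum σ
        exact mul_le_mul_of_nonneg_left (le_ciSup hb t) (Real.exp_pos _).le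
      · exact mul_nonneg (Real.exp_pos _).le (DTest.DSup_nonneg hνsum σ)
    · rw [show Real.exp (σ * f.lam 0) * DTest.DSup f.a ν σ
          = DTest.DSup f.a ν σ * Real.exp (σ * f.lam 0) by ring,
        ← le_div_iff₀ (Real.exp_pos _), DTest.DSup]
      refine Real.iSup_le (fun t => ?_) ?_
      · rw [le_div_iff₀ (Real.exp_pos _)]
        calc ‖DTest.DSer f.a ν ((σ:ℂ) + (t:ℂ) * Complex.I)‖ * Real.exp (σ * f.lam 0)
            = ‖DTest.DSer f.a f.lam ((σ:ℂ) + (t:ℂ) * Complex.I)‖ := by rw [hnorm t]; ring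
          _ ≤ _ := le_ciSup (DTest.bddAbove_range f.summable' σ) t
      · exact div_nonneg (Real.iSup_nonneg fun t => norm_nonneg _) (Real.exp_pos _).le
  have hνsm : StrictMono ν := fun i j hij => by
    simpa [hν] using sub_lt_sub_right (f.lam_strictMono hij) (f.lam 0)
  intro σ1 σ2 hlt
  rw [hrel σ1, hrel σ2]
  have h2 : DTest.DSup f.a ν σ1 ≤ DTest.DSup f.a ν σ2 :=
    DTest.DSup_mono hνsum hν0 hνsm hlt.le
  have h3 : 0 < DTest.DSup f.a ν σ2 := by
    calc (0:ℝ) < Real.exp (σ2 * ν k) * ‖f.a k‖ := by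
          have := norm_pos_iff.2 hk
          positivity
      _ ≤ _ := DTest.bohr hνsum hνsm.injective k σ2
  have h4 : Real.exp (σ1 * f.lam 0) < Real.exp (σ2 * f.lam 0) := by
    apply Real.exp_lt_exp.2
    have := f.lam_pos 0
    nlinarith
  calc Real.exp (σ1 * f.lam 0) * DTest.DSup f.a ν σ1
      ≤ Real.exp (σ1 * f.lam 0) * DTest.DSup f.a ν σ2 := by
        exact mul_le_mul_of_nonneg_left h2 (Real.exp_pos _).le
    _ < Real.exp (σ2 * f.lam 0) * DTest.DSup f.a ν σ2 := by
        exact mul_lt_mul_of_pos_right h4 h3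

lemma M_surj {y : ℝ} (hy : 0 < y) : ∃ σ, f.M σ = y := by
  obtain ⟨σ2, hσ2⟩ := (f.M_tendsto_atTop hne).eventually_ge_atTop y |>.exists
  obtain ⟨σ1, hσ1, hσ12⟩ :=
    (((f.M_tendsto_atBot).eventually_lt_const hy).and (eventually_le_atBot σ2)).exists
  obtain ⟨σ, _, hσ⟩ := intermediate_value_Icc hσ12 (f.M_continuous.continuousOn)
    (Set.mem_Icc.2 ⟨hσ1.le, hσ2⟩)
  exact ⟨σ, hσ⟩

lemma Minv_M (σ : ℝ) : f.Minv (f.M σ) = σ := by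
  have hset : {τ : ℝ | f.M σ ≤ f.M τ} = Set.Ici σ := by
    ext τ
    simp only [Set.mem_setOf_eq, Set.mem_Ici]
    exact (f.M_strictMono hne).le_iff_le
  rw [Minv, hset, csInf_Ici]

lemma M_Minv {y : ℝ} (hy : 0 < y) : f.M (f.Minv y) = y := by
  obtain ⟨σ, rfl⟩ := f.M_surj hne hy
  rw [f.Minv_M hne]

lemma Minv_tendsto_atTop : Tendsto f.Minv atTop atTop := by
  rw [tendsto_atTop_atTop]
  intro K
  refine ⟨f.M K + 1, fun y hy => ?_⟩
  have hypos : 0 < y := by linarith [f.M_nonneg K]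
  obtain ⟨σ, hσ⟩ := f.M_surj hne hypos
  refine le_csInf ⟨σ, by simpa [Set.mem_setOf_eq, hσ]⟩ fun τ hτ => ?_
  by_contra hcon
  push_neg at hcon
  have h1 : f.M τ ≤ f.M K := f.M_mono hcon.le
  have h2 : y ≤ f.M τ := hτ
  linarith

end NonTrivial
end VVDS

namespace VVDS
variable {E2 : Type*} [NormedAddCommGroup E2] [NormedSpace ℂ E2] [CompleteSpace E2]

lemma M_eq_zero (f : VVDS E2) (hz : ∀ n, f.a n = 0) (σ : ℝ) : f.M σ = 0 := by
  have hfun : f.toFun = fun _ => 0 := by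
    funext s
    rw [VVDS.toFun]
    simp [hz]
  rw [VVDS.M, hfun]
  simp

end VVDS

lemma iterlog_zero : ∀ k : ℕ, Real.log^[k] (0:ℝ) = 0
  | 0 => rfl
  | (k+1) => by rw [Function.iterate_succ_apply', iterlog_zero k, Real.log_zero]

lemma tendsto_iterlog : ∀ k : ℕ, Tendsto (Real.log^[k]) atTop atTop
  | 0 => tendsto_id
  | (k+1) => by
      rw [Function.iterate_succ']
      exact (Real.tendsto_log_atTop).comp (tendsto_iterlog k)

/-- liminf of such a ratio with eventually-constant inner function vanishes -/
lemma liminf_const_case (c : ℝ) (k j : ℕ) (φfn : ℝ → ℝ) (hev : ∀ᶠ σ : ℝ in atTop, φfn σ = c) :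
    liminf (fun σ : ℝ => ((Real.log^[k] (φfn σ) / Real.log^[j] σ : ℝ) : EReal)) atTop
      = (0 : EReal) := by
  have hT : Tendsto (fun σ : ℝ => Real.log^[k] (φfn σ) / Real.log^[j] σ) atTop (𝓝 0) := by
    have h1 : Tendsto (fun σ : ℝ => (Real.log^[k] c) / Real.log^[j] σ) atTop (𝓝 0) :=
      Tendsto.div_atTop tendsto_const_nhds (tendsto_iterlog j)
    apply h1.congr'
    filter_upwards [hev] with σ hσ
    rw [hσ]
  have h2 : Tendsto (fun σ : ℝ => ((Real.log^[k] (φfn σ) / Real.log^[j] σ : ℝ) : EReal)) atTop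
      (𝓝 ((0:ℝ) : EReal)) := by
    rw [EReal.tendsto_coe]
    exact hT
  rw [h2.liminf_eq]
  norm_num

lemma ereal_le_of_forall_lt {z w : EReal} (hx : ∀ r : ℝ, (r : EReal) < z → (r : EReal) ≤ w) :
    z ≤ w := by
  by_contra hcon
  push_neg at hcon
  obtain ⟨r, hr1, hr2⟩ := EReal.lt_iff_exists_real_btwn.1 hcon
  exact absurd (hx r hr2) (not_le.2 hr1)

lemma ereal_le_of_forall_gt {z w : EReal} (hx : ∀ r : ℝ, z < (r : EReal) → w ≤ (r : EReal)) :
    w ≤ z := by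
  by_contra hcon
  push_neg at hcon
  obtain ⟨r, hr1, hr2⟩ := EReal.lt_iff_exists_real_btwn.1 hcon
  exact absurd (hx r hr1) (not_le.2 hr2)

lemma pick_below {u v r : ℝ} (hu : 0 < u) (hv : 0 < v) (h : r < u / v) :
    ∃ u' v' : ℝ, 0 < u' ∧ u' < u ∧ v < v' ∧ 0 < v' ∧ r ≤ u' / v' := by
  rcases le_or_gt r 0 with hr | hr
  · refine ⟨u / 2, v + 1, by linarith, by linarith, by linarith, by linarith, ?_⟩
    have : (0:ℝ) < u / 2 / (v + 1) := by positivity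
    linarith
  · have hrv : r * v < u := (lt_div_iff₀ hv).1 h
    refine ⟨(r * v + u) / 2, (r * v + u) / 2 / r, by nlinarith, by linarith, ?_, by positivity,
      ?_⟩
    · rw [lt_div_iff₀ hr]; nlinarith
    · rw [le_div_iff₀ (by positivity : (0:ℝ) < (r * v + u) / 2 / r), mul_comm,
        div_mul_cancel₀ _ hr.ne']
  
lemma pick_above {u v r : ℝ} (hu : 0 < u) (hv : 0 < v) (h : u / v < r) :
    ∃ u' v' : ℝ, u < u' ∧ 0 < v' ∧ v' < v ∧ u' / v' ≤ r := by
  have hr : 0 < r := lt_trans (by positivity) h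
  have huv : u < r * v := (div_lt_iff₀ hv).1 h
  have hu' : (0:ℝ) < (u + r * v) / 2 := by positivity
  refine ⟨(u + r * v) / 2, (u + r * v) / 2 / r, by linarith, by positivity, ?_, ?_⟩
  · rw [div_lt_iff₀ hr]; nlinarith
  · rw [div_div_eq_mul_div, mul_comm, mul_div_assoc, div_self hu'.ne', mul_one]
/-- The (p,q)-th relative Ritt order of `f` with respect to `g`. -/
def relRittOrder (p q : ℕ) (f : VVDS E) (g : VVDS F) : EReal :=
  limsup (fun σ : ℝ =>
    ((Real.log^[p] (g.Minv (f.M σ)) / Real.log^[q] σ : ℝ) : EReal)) atTop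

/-- The (p,q)-th relative Ritt lower order of `f` with respect to `g`. -/
def relRittLowerOrder (p q : ℕ) (f : VVDS E) (g : VVDS F) : EReal :=
  liminf (fun σ : ℝ =>
    ((Real.log^[p] (g.Minv (f.M σ)) / Real.log^[q] σ : ℝ) : EReal)) atTop

/-- The (p,q)-th relative Ritt type of `f` with respect to `g`. -/
def relRittType (p q : ℕ) (f : VVDS E) (g : VVDS F) : EReal :=
  limsup (fun σ : ℝ =>
    ((Real.log^[p-1] (g.Minv (f.M σ)) /
      (Real.log^[q-1] σ) ^ (relRittOrder p q f g).toReal : ℝ) : EReal)) atTop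

/-- The (p,q)-th relative Ritt lower type of `f` with respect to `g`. -/
def relRittLowerType (p q : ℕ) (f : VVDS E) (g : VVDS F) : EReal :=
  liminf (fun σ : ℝ =>
    ((Real.log^[p-1] (g.Minv (f.M σ)) /
      (Real.log^[q-1] σ) ^ (relRittOrder p q f g).toReal : ℝ) : EReal)) atTop

/-- The (p,q)-th relative Ritt weak type of `f` with respect to `g`. -/
def relRittWeakType (p q : ℕ) (f : VVDS E) (g : VVDS F) : EReal :=
  liminf (fun σ : ℝ =>
    ((Real.log^[p-1] (g.Minv (f.M σ)) /
      (Real.log^[q-1] σ) ^ (relRittLowerOrder p q f g).toReal : ℝ) : EReal)) atTop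

/-- The growth indicator `τ̄_g^{(p,q)}(f)`. -/
def relRittUpperWeakType (p q : ℕ) (f : VVDS E) (g : VVDS F) : EReal :=
  limsup (fun σ : ℝ =>
    ((Real.log^[p-1] (g.Minv (f.M σ)) /
      (Real.log^[q-1] σ) ^ (relRittLowerOrder p q f g).toReal : ℝ) : EReal)) atTop

theorem stmt_0 (f : VVDS E) (g : VVDS F) (h : VVDS G) (p q m : ℕ)
    (hf1 : (0 : EReal) < relRittLowerOrder m q f h)
    (hf2 : relRittLowerOrder m q f h ≤ relRittOrder m q f h)
    (hf3 : relRittOrder m q f h < ⊤)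
    (hg1 : (0 : EReal) < relRittLowerOrder m p g h)
    (hg2 : relRittLowerOrder m p g h ≤ relRittOrder m p g h)
    (hg3 : relRittOrder m p g h < ⊤)
    :
    (((relRittLowerOrder m q f h).toReal / (relRittOrder m p g h).toReal : ℝ) : EReal) ≤ relRittLowerOrder p q f g ∧ relRittLowerOrder p q f g ≤ ((min ((relRittLowerOrder m q f h).toReal / (relRittLowerOrder m p g h).toReal) ((relRittOrder m q f h).toReal / (relRittOrder m p g h).toReal) : ℝ) : EReal) ∧ ((min ((relRittLowerOrder m q f h).toReal / (relRittLowerOrder m p g h).toReal) ((relRittOrder m q f h).toReal / (relRittOrder m p g h).toReal) : ℝ) : EReal) ≤ ((max ((relRittLowerOrder m q f h).toReal / (relRittLowerOrder m p g h).toReal) ((relRittOrder m q f h).toReal / (relRittOrder m p g h).toReal) : ℝ) : EReal) ∧ ((max ((relRittLowerOrder m q f h).toReal / (relRittLowerOrder m p g h).toReal) ((relRittOrder m q f h).toReal / (relRittOrder m p g h).toReal) : ℝ) : EReal) ≤ relRittOrder p q f g ∧ relRittOrder p q f g ≤ (((relRittOrder m q f h).toReal / (relRittLowerOrder m p g h).toReal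 : ℝ) : EReal) := by
  classical
  -- Step 1 : the three series are nonzero
  have hnef : ∃ n, f.a n ≠ 0 := by
    by_contra hcon
    push_neg at hcon
    have hev : ∀ᶠ σ : ℝ in atTop, h.Minv (f.M σ) = h.Minv 0 :=
      Eventually.of_forall fun σ => by rw [f.M_eq_zero hcon σ]
    have h0 : relRittLowerOrder m q f h = 0 :=
      liminf_const_case (h.Minv 0) m q (fun σ => h.Minv (f.M σ)) hev
    rw [h0] at hf1
    exact lt_irrefl _ hf1
  have hneh : ∃ n, h.a n ≠ 0 := by
    by_contra hcon
    push_neg at hcon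
    have hev : ∀ᶠ σ : ℝ in atTop, h.Minv (f.M σ) = 0 := by
      refine Eventually.of_forall fun σ => ?_
      rw [VVDS.Minv]
      have hempty : {τ : ℝ | f.M σ ≤ h.M τ} = (∅ : Set ℝ) := by
        ext τ
        simp only [Set.mem_setOf_eq, Set.mem_empty_iff_false, iff_false, not_le]
        rw [h.M_eq_zero hcon τ]
        exact f.M_pos hnef σ
      rw [hempty, Real.sInf_empty]
    have h0 : relRittLowerOrder m q f h = 0 := by
      have := liminf_const_case 0 m q (fun σ => h.Minv (f.M σ)) hev
      rw [relRittLowerOrder]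
      rw [show (fun σ : ℝ => ((Real.log^[m] (h.Minv (f.M σ)) / Real.log^[q] σ : ℝ) : EReal))
        = (fun σ : ℝ => ((Real.log^[m] ((fun σ => h.Minv (f.M σ)) σ) / Real.log^[q] σ : ℝ)
          : EReal)) from rfl]
      exact this
    rw [h0] at hf1
    exact lt_irrefl _ hf1
  have hneg : ∃ n, g.a n ≠ 0 := by
    by_contra hcon
    push_neg at hcon
    have hev : ∀ᶠ τ : ℝ in atTop, h.Minv (g.M τ) = h.Minv 0 :=
      Eventually.of_forall fun τ => by rw [g.M_eq_zero hcon τ]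
    have h0 : relRittLowerOrder m p g h = 0 :=
      liminf_const_case (h.Minv 0) m p (fun τ => h.Minv (g.M τ)) hev
    rw [h0] at hg1
    exact lt_irrefl _ hg1
  -- Step 2 : real values of the four indicators
  have hfLne_top : relRittLowerOrder m q f h ≠ ⊤ := (lt_of_le_of_lt hf2 hf3).ne
  have hfLne_bot : relRittLowerOrder m q f h ≠ ⊥ := (lt_of_le_of_lt bot_le hf1).ne'
  have hfUne_top : relRittOrder m q f h ≠ ⊤ := hf3.ne
  have hfUne_bot : relRittOrder m q f h ≠ ⊥ :=
    (lt_of_le_of_lt bot_le (lt_of_lt_of_le hf1 hf2)).ne'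
  have hgLne_top : relRittLowerOrder m p g h ≠ ⊤ := (lt_of_le_of_lt hg2 hg3).ne
  have hgLne_bot : relRittLowerOrder m p g h ≠ ⊥ := (lt_of_le_of_lt bot_le hg1).ne'
  have hgUne_top : relRittOrder m p g h ≠ ⊤ := hg3.ne
  have hgUne_bot : relRittOrder m p g h ≠ ⊥ :=
    (lt_of_le_of_lt bot_le (lt_of_lt_of_le hg1 hg2)).ne'
  set aR := (relRittLowerOrder m q f h).toReal with haRdef
  set bR := (relRittOrder m q f h).toReal with hbRdef
  set cR := (relRittLowerOrder m p g h).toReal with hcRdef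
  set dR := (relRittOrder m p g h).toReal with hdRdef
  have haR : ((aR : ℝ) : EReal) = relRittLowerOrder m q f h := EReal.coe_toReal hfLne_top hfLne_bot
  have hbR : ((bR : ℝ) : EReal) = relRittOrder m q f h := EReal.coe_toReal hfUne_top hfUne_bot
  have hcR : ((cR : ℝ) : EReal) = relRittLowerOrder m p g h := EReal.coe_toReal hgLne_top hgLne_bot
  have hdR : ((dR : ℝ) : EReal) = relRittOrder m p g h := EReal.coe_toReal hgUne_top hgUne_bot
  have haRpos : 0 < aR := by
    have := hf1; rw [← haR] at this; exact_mod_cast this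
  have hbRpos : 0 < bR := by
    have := lt_of_lt_of_le hf1 hf2; rw [← hbR] at this; exact_mod_cast this
  have hcRpos : 0 < cR := by
    have := hg1; rw [← hcR] at this; exact_mod_cast this
  have hdRpos : 0 < dR := by
    have := lt_of_lt_of_le hg1 hg2; rw [← hdR] at this; exact_mod_cast this
  -- Step 3 : eventual and frequent real bounds
  have hRlow : ∀ r : ℝ, r < aR → ∀ᶠ σ : ℝ in atTop,
      r < Real.log^[m] (h.Minv (f.M σ)) / Real.log^[q] σ := by
    intro r hr
    have h1 : (r : EReal) < relRittLowerOrder m q f h := by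
      rw [← haR]; exact_mod_cast hr
    unfold relRittLowerOrder at h1
    exact (eventually_lt_of_lt_liminf h1).mono fun σ hσ => by exact_mod_cast hσ
  have hRhigh : ∀ r : ℝ, bR < r → ∀ᶠ σ : ℝ in atTop,
      Real.log^[m] (h.Minv (f.M σ)) / Real.log^[q] σ < r := by
    intro r hr
    have h1 : relRittOrder m q f h < (r : EReal) := by
      rw [← hbR]; exact_mod_cast hr
    unfold relRittOrder at h1
    exact (eventually_lt_of_limsup_lt h1).mono fun σ hσ => by exact_mod_cast hσ
  have hRfreq_a : ∀ r : ℝ, aR < r → ∃ᶠ σ : ℝ in atTop,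
      Real.log^[m] (h.Minv (f.M σ)) / Real.log^[q] σ < r := by
    intro r hr
    have h1 : relRittLowerOrder m q f h < (r : EReal) := by
      rw [← haR]; exact_mod_cast hr
    unfold relRittLowerOrder at h1
    exact (frequently_lt_of_liminf_lt (by isBoundedDefault) h1).mono fun σ hσ => by
      exact_mod_cast hσ
  have hRfreq_b : ∀ r : ℝ, r < bR → ∃ᶠ σ : ℝ in atTop,
      r < Real.log^[m] (h.Minv (f.M σ)) / Real.log^[q] σ := by
    intro r hr
    have h1 : (r : EReal) < relRittOrder m q f h := by
      rw [← hbR]; exact_mod_cast hr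
    unfold relRittOrder at h1
    exact (frequently_lt_of_lt_limsup (by isBoundedDefault) h1).mono fun σ hσ => by
      exact_mod_cast hσ
  have hSlow : ∀ r : ℝ, r < cR → ∀ᶠ τ : ℝ in atTop,
      r < Real.log^[m] (h.Minv (g.M τ)) / Real.log^[p] τ := by
    intro r hr
    have h1 : (r : EReal) < relRittLowerOrder m p g h := by
      rw [← hcR]; exact_mod_cast hr
    unfold relRittLowerOrder at h1
    exact (eventually_lt_of_lt_liminf h1).mono fun τ hτ => by exact_mod_cast hτ
  have hShigh : ∀ r : ℝ, dR < r → ∀ᶠ τ : ℝ in atTop,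
      Real.log^[m] (h.Minv (g.M τ)) / Real.log^[p] τ < r := by
    intro r hr
    have h1 : relRittOrder m p g h < (r : EReal) := by
      rw [← hdR]; exact_mod_cast hr
    unfold relRittOrder at h1
    exact (eventually_lt_of_limsup_lt h1).mono fun τ hτ => by exact_mod_cast hτ
  have hSfreq_c : ∀ r : ℝ, cR < r → ∃ᶠ τ : ℝ in atTop,
      Real.log^[m] (h.Minv (g.M τ)) / Real.log^[p] τ < r := by
    intro r hr
    have h1 : relRittLowerOrder m p g h < (r : EReal) := by
      rw [← hcR]; exact_mod_cast hr
    unfold relRittLowerOrder at h1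
    exact (frequently_lt_of_liminf_lt (by isBoundedDefault) h1).mono fun τ hτ => by
      exact_mod_cast hτ
  have hSfreq_d : ∀ r : ℝ, r < dR → ∃ᶠ τ : ℝ in atTop,
      r < Real.log^[m] (h.Minv (g.M τ)) / Real.log^[p] τ := by
    intro r hr
    have h1 : (r : EReal) < relRittOrder m p g h := by
      rw [← hdR]; exact_mod_cast hr
    unfold relRittOrder at h1
    exact (frequently_lt_of_lt_limsup (by isBoundedDefault) h1).mono fun τ hτ => by
      exact_mod_cast hτ
  -- Step 4 : tendsto facts
  have hxT : Tendsto (fun σ : ℝ => g.Minv (f.M σ)) atTop atTop :=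
    (g.Minv_tendsto_atTop hneg).comp (f.M_tendsto_atTop hnef)
  have hφT : Tendsto (fun τ : ℝ => f.Minv (g.M τ)) atTop atTop :=
    (f.Minv_tendsto_atTop hnef).comp (g.M_tendsto_atTop hneg)
  have hψT : Tendsto (fun σ : ℝ => h.Minv (f.M σ)) atTop atTop :=
    (h.Minv_tendsto_atTop hneh).comp (f.M_tendsto_atTop hnef)
  have hposA : ∀ᶠ σ : ℝ in atTop, 0 < Real.log^[m] (h.Minv (f.M σ)) :=
    ((tendsto_iterlog m).comp hψT).eventually_gt_atTop 0
  have hposLq : ∀ᶠ σ : ℝ in atTop, 0 < Real.log^[q] σ :=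
    (tendsto_iterlog q).eventually_gt_atTop 0
  have hposLpx : ∀ᶠ σ : ℝ in atTop, 0 < Real.log^[p] (g.Minv (f.M σ)) :=
    ((tendsto_iterlog p).comp hxT).eventually_gt_atTop 0
  have hposLp : ∀ᶠ τ : ℝ in atTop, 0 < Real.log^[p] τ :=
    (tendsto_iterlog p).eventually_gt_atTop 0
  have hposLqφ : ∀ᶠ τ : ℝ in atTop, 0 < Real.log^[q] (f.Minv (g.M τ)) :=
    ((tendsto_iterlog q).comp hφT).eventually_gt_atTop 0
  -- identities
  have hId1 : ∀ σ : ℝ, h.Minv (g.M (g.Minv (f.M σ))) = h.Minv (f.M σ) := fun σ => by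
    rw [g.M_Minv hneg (f.M_pos hnef σ)]
  have hId2 : ∀ τ : ℝ, g.Minv (f.M (f.Minv (g.M τ))) = τ := fun τ => by
    rw [f.M_Minv hnef (g.M_pos hneg τ), g.Minv_M hneg]
  have hId3 : ∀ τ : ℝ, h.Minv (f.M (f.Minv (g.M τ))) = h.Minv (g.M τ) := fun τ => by
    rw [f.M_Minv hnef (g.M_pos hneg τ)]
  -- Step 5 : the six inequalities
  -- (1) a/d ≤ lower order
  have G1 : ((aR / dR : ℝ) : EReal) ≤ relRittLowerOrder p q f g := by
    refine ereal_le_of_forall_lt fun r hr => ?_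
    have hrlt : r < aR / dR := by exact_mod_cast hr
    obtain ⟨a', d', ha'0, ha', hd', hd'0, hr'⟩ := pick_below haRpos hdRpos hrlt
    unfold relRittLowerOrder
    refine le_liminf_of_le (by isBoundedDefault) ?_
    filter_upwards [hRlow a' ha', hxT.eventually (hShigh d' hd'), hposLq, hposA, hposLpx]
      with σ h1 h2 h3 h4 h5
    rw [EReal.coe_le_coe_iff]
    rw [hId1 σ] at h2
    have hA1 : a' * Real.log^[q] σ < Real.log^[m] (h.Minv (f.M σ)) := (lt_div_iff₀ h3).1 h1
    have hA2 : Real.log^[m] (h.Minv (f.M σ)) < d' * Real.log^[p] (g.Minv (f.M σ)) :=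
      (div_lt_iff₀ h5).1 h2
    have hres : a' / d' < Real.log^[p] (g.Minv (f.M σ)) / Real.log^[q] σ := by
      rw [div_lt_div_iff₀ hd'0 h3]
      nlinarith
    linarith
  -- (5) upper order ≤ b/c
  have G5 : relRittOrder p q f g ≤ ((bR / cR : ℝ) : EReal) := by
    refine ereal_le_of_forall_gt fun r hr => ?_
    have hrlt : bR / cR < r := by exact_mod_cast hr
    obtain ⟨b', c', hb', hc'0, hc', hr'⟩ := pick_above hbRpos hcRpos hrlt
    unfold relRittOrder
    refine limsup_le_of_le (by isBoundedDefault) ?_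
    filter_upwards [hRhigh b' hb', hxT.eventually (hSlow c' hc'), hposLq, hposA, hposLpx]
      with σ h1 h2 h3 h4 h5
    rw [EReal.coe_le_coe_iff]
    rw [hId1 σ] at h2
    have hA1 : Real.log^[m] (h.Minv (f.M σ)) < b' * Real.log^[q] σ := (div_lt_iff₀ h3).1 h1
    have hA2 : c' * Real.log^[p] (g.Minv (f.M σ)) < Real.log^[m] (h.Minv (f.M σ)) :=
      (lt_div_iff₀ h5).1 h2
    have hres : Real.log^[p] (g.Minv (f.M σ)) / Real.log^[q] σ < b' / c' := by
      rw [div_lt_div_iff₀ h3 hc'0]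
      nlinarith
    linarith
  -- (2a) lower order ≤ a/c
  have G2a : relRittLowerOrder p q f g ≤ ((aR / cR : ℝ) : EReal) := by
    refine ereal_le_of_forall_gt fun r hr => ?_
    have hrlt : aR / cR < r := by exact_mod_cast hr
    obtain ⟨a', c', ha', hc'0, hc', hr'⟩ := pick_above haRpos hcRpos hrlt
    unfold relRittLowerOrder
    refine liminf_le_of_frequently_le ?_ (by isBoundedDefault)
    have hfr := (hRfreq_a a' ha').and_eventually
      ((hxT.eventually (hSlow c' hc')).and (hposLq.and (hposA.and hposLpx)))
    refine hfr.mono ?_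
    rintro σ ⟨h1, h2, h3, h4, h5⟩
    rw [EReal.coe_le_coe_iff]
    rw [hId1 σ] at h2
    have hA1 : Real.log^[m] (h.Minv (f.M σ)) < a' * Real.log^[q] σ := (div_lt_iff₀ h3).1 h1
    have hA2 : c' * Real.log^[p] (g.Minv (f.M σ)) < Real.log^[m] (h.Minv (f.M σ)) :=
      (lt_div_iff₀ h5).1 h2
    have hres : Real.log^[p] (g.Minv (f.M σ)) / Real.log^[q] σ < a' / c' := by
      rw [div_lt_div_iff₀ h3 hc'0]
      nlinarith
    linarith
  -- (2b) lower order ≤ b/d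
  have G2b : relRittLowerOrder p q f g ≤ ((bR / dR : ℝ) : EReal) := by
    refine ereal_le_of_forall_gt fun r hr => ?_
    have hrlt : bR / dR < r := by exact_mod_cast hr
    obtain ⟨b', d', hb', hd'0, hd', hr'⟩ := pick_above hbRpos hdRpos hrlt
    unfold relRittLowerOrder
    refine liminf_le_of_frequently_le ?_ (by isBoundedDefault)
    have hfr := (hSfreq_d d' hd').and_eventually
      ((hφT.eventually (hRhigh b' hb')).and (hposLp.and hposLqφ))
    have hfr2 : ∃ᶠ τ : ℝ in atTop,
        ((Real.log^[p] (g.Minv (f.M (f.Minv (g.M τ)))) /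
          Real.log^[q] (f.Minv (g.M τ)) : ℝ) : EReal) ≤ ((r : ℝ) : EReal) := by
      refine hfr.mono ?_
      rintro τ ⟨h1, h2, h3, h4⟩
      rw [EReal.coe_le_coe_iff]
      rw [hId2 τ]
      rw [hId3 τ] at h2
      have hA1 : Real.log^[m] (h.Minv (g.M τ)) < b' * Real.log^[q] (f.Minv (g.M τ)) :=
        (div_lt_iff₀ h4).1 h2
      have hA2 : d' * Real.log^[p] τ < Real.log^[m] (h.Minv (g.M τ)) := (lt_div_iff₀ h3).1 h1
      have hres : Real.log^[p] τ / Real.log^[q] (f.Minv (g.M τ)) < b' / d' := by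
        rw [div_lt_div_iff₀ h4 hd'0]
        nlinarith
      linarith
    have := Filter.frequently_map (m := fun τ : ℝ => f.Minv (g.M τ))
      (P := fun σ : ℝ => ((Real.log^[p] (g.Minv (f.M σ)) / Real.log^[q] σ : ℝ) : EReal)
        ≤ ((r : ℝ) : EReal)) |>.2 hfr2
    exact this.filter_mono hφT
  -- (4a) a/c ≤ upper order
  have G4a : ((aR / cR : ℝ) : EReal) ≤ relRittOrder p q f g := by
    refine ereal_le_of_forall_lt fun r hr => ?_
    have hrlt : r < aR / cR := by exact_mod_cast hr
    obtain ⟨a', c', ha'0, ha', hc', hc'0, hr'⟩ := pick_below haRpos hcRpos hrlt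
    unfold relRittOrder
    refine le_limsup_of_frequently_le ?_ (by isBoundedDefault)
    have hfr := (hSfreq_c c' hc').and_eventually
      ((hφT.eventually (hRlow a' ha')).and (hposLp.and hposLqφ))
    have hfr2 : ∃ᶠ τ : ℝ in atTop,
        ((r : ℝ) : EReal) ≤ ((Real.log^[p] (g.Minv (f.M (f.Minv (g.M τ)))) /
          Real.log^[q] (f.Minv (g.M τ)) : ℝ) : EReal) := by
      refine hfr.mono ?_
      rintro τ ⟨h1, h2, h3, h4⟩
      rw [EReal.coe_le_coe_iff]
      rw [hId2 τ]
      rw [hId3 τ] at h2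
      have hA1 : a' * Real.log^[q] (f.Minv (g.M τ)) < Real.log^[m] (h.Minv (g.M τ)) :=
        (lt_div_iff₀ h4).1 h2
      have hA2 : Real.log^[m] (h.Minv (g.M τ)) < c' * Real.log^[p] τ := (div_lt_iff₀ h3).1 h1
      have hres : a' / c' < Real.log^[p] τ / Real.log^[q] (f.Minv (g.M τ)) := by
        rw [div_lt_div_iff₀ hc'0 h4]
        nlinarith
      linarith
    have := Filter.frequently_map (m := fun τ : ℝ => f.Minv (g.M τ))
      (P := fun σ : ℝ => ((r : ℝ) : EReal)
        ≤ ((Real.log^[p] (g.Minv (f.M σ)) / Real.log^[q] σ : ℝ) : EReal)) |>.2 hfr2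
    exact this.filter_mono hφT
  -- (4b) b/d ≤ upper order
  have G4b : ((bR / dR : ℝ) : EReal) ≤ relRittOrder p q f g := by
    refine ereal_le_of_forall_lt fun r hr => ?_
    have hrlt : r < bR / dR := by exact_mod_cast hr
    obtain ⟨b', d', hb'0, hb', hd', hd'0, hr'⟩ := pick_below hbRpos hdRpos hrlt
    unfold relRittOrder
    refine le_limsup_of_frequently_le ?_ (by isBoundedDefault)
    have hfr := (hRfreq_b b' hb').and_eventually
      ((hxT.eventually (hShigh d' hd')).and (hposLq.and (hposA.and hposLpx)))
    refine hfr.mono ?_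
    rintro σ ⟨h1, h2, h3, h4, h5⟩
    rw [EReal.coe_le_coe_iff]
    rw [hId1 σ] at h2
    have hA1 : b' * Real.log^[q] σ < Real.log^[m] (h.Minv (f.M σ)) := (lt_div_iff₀ h3).1 h1
    have hA2 : Real.log^[m] (h.Minv (f.M σ)) < d' * Real.log^[p] (g.Minv (f.M σ)) :=
      (div_lt_iff₀ h5).1 h2
    have hres : b' / d' < Real.log^[p] (g.Minv (f.M σ)) / Real.log^[q] σ := by
      rw [div_lt_div_iff₀ hd'0 h3]
      nlinarith
    linarith
  -- assemble
  have hmincoe : ((min (aR / cR) (bR / dR) : ℝ) : EReal)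
      = min ((aR / cR : ℝ) : EReal) ((bR / dR : ℝ) : EReal) :=
    (EReal.coe_strictMono.monotone).map_min
  have hmaxcoe : ((max (aR / cR) (bR / dR) : ℝ) : EReal)
      = max ((aR / cR : ℝ) : EReal) ((bR / dR : ℝ) : EReal) :=
    (EReal.coe_strictMono.monotone).map_max
  refine ⟨G1, ?_, ?_, ?_, G5⟩
  · rw [hmincoe]
    exact le_min G2a G2b
  · exact EReal.coe_le_coe_iff.2 (min_le_max)
  · rw [hmaxcoe]
    exact max_le G4a G4b
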